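/- arXiv:0911.1298 — 2 statements merged into one kernel-verified Lean document; each statement's English description precedes it below -/
import Mathlib

section
/- The affine Grassmann code C^A(ℓ,m), defined as the image of F(ℓ,m) under the evaluation map at all ℓ×ℓ' matrices over F_q, is a nondegenerate linear code of length q^{ℓℓ'} and dimension binomial(m, ℓ), where m = ℓ+ℓ'. -/
open MvPolynomial

/-- The minor of the generic `ℓ × ℓ'` matrix of indeterminates determined by the
rows `r` and columns `c`. -/
noncomputable def genMinor {F : Type*} [Field F] (ℓ ℓ' k : ℕ)
    (r : Fin k → Fin ℓ) (c : Fin k → Fin ℓ') : MvPolynomial (Fin ℓ × Fin ℓ') F :=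
  (Matrix.of fun i j => (X (r i, c j) : MvPolynomial (Fin ℓ × Fin ℓ') F)).det

/-- The set of all minors (of all orders `0 ≤ k ≤ ℓ`, the order-`0` minor being `1`)
of the generic `ℓ × ℓ'` matrix, as elements of the polynomial ring. -/
def minorSet (F : Type*) [Field F] (ℓ ℓ' : ℕ) : Set (MvPolynomial (Fin ℓ × Fin ℓ') F) :=
  {p | ∃ (k : ℕ) (r : Fin k → Fin ℓ) (c : Fin k → Fin ℓ'),
    StrictMono r ∧ StrictMono c ∧ p = genMinor ℓ ℓ' k r c}

/-- The evaluation map, sending a polynomial to the tuple of its values at all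
`ℓ × ℓ'` matrices over `F`, as a linear map. -/
noncomputable def evLM (F : Type*) [Field F] (ℓ ℓ' : ℕ) :
    MvPolynomial (Fin ℓ × Fin ℓ') F →ₗ[F] (Matrix (Fin ℓ) (Fin ℓ') F → F) :=
  (aeval (fun x : Fin ℓ × Fin ℓ' => fun P : Matrix (Fin ℓ) (Fin ℓ') F => P x.1 x.2)).toLinearMap

/-- The affine Grassmann code `C^A(ℓ, ℓ+ℓ')`: the image of the span of all minors of
the generic `ℓ × ℓ'` matrix under the evaluation map. -/
noncomputable def affGrassCode (F : Type*) [Field F] (ℓ ℓ' : ℕ) :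
    Submodule F (Matrix (Fin ℓ) (Fin ℓ') F → F) :=
  Submodule.map (evLM F ℓ ℓ') (Submodule.span F (minorSet F ℓ ℓ'))

/-- The Hamming weight of a codeword: the number of nonzero coordinates. -/
noncomputable def wt {F : Type*} [Field F] {ℓ ℓ' : ℕ} (c : Matrix (Fin ℓ) (Fin ℓ') F → F) : ℕ :=
  Nat.card {P : Matrix (Fin ℓ) (Fin ℓ') F // c P ≠ 0}

/-! ### Auxiliary material -/

open Finset

/-- The exponent finsupp of the multilinear monomial `∏ⱼ X (p j)`. -/
noncomputable def diagF {σ : Type*} {k : ℕ} (p : Fin k → σ) : σ →₀ ℕ :=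
  ∑ j, Finsupp.single (p j) 1

lemma diagF_apply {σ : Type*} [DecidableEq σ] {k : ℕ} {p : Fin k → σ}
    (hp : Function.Injective p) (x : σ) :
    diagF p x = if x ∈ Finset.image p univ then 1 else 0 := by
  rw [diagF, Finsupp.finset_sum_apply]
  simp only [Finsupp.single_apply]
  by_cases hx : x ∈ image p univ
  · obtain ⟨j0, -, rfl⟩ := mem_image.1 hx
    rw [if_pos hx, Finset.sum_eq_single j0]
    · simp
    · intro b _ hb
      exact if_neg fun h => hb (hp h)
    · simp
  · rw [if_neg hx]
    refine Finset.sum_eq_zero fun j _ => if_neg fun h => hx (mem_image.2 ⟨j, mem_univ _, h⟩)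

lemma diagF_eq_iff {σ : Type*} [DecidableEq σ] {k k' : ℕ} {p : Fin k → σ} {p' : Fin k' → σ}
    (hp : Function.Injective p) (hp' : Function.Injective p') :
    diagF p = diagF p' ↔ image p univ = image p' univ := by
  constructor
  · intro h
    ext x
    have h1 := DFunLike.congr_fun h x
    rw [diagF_apply hp, diagF_apply hp'] at h1
    by_cases h2 : x ∈ image p univ <;> by_cases h3 : x ∈ image p' univ <;> simp_all
  · intro h
    ext x
    rw [diagF_apply hp, diagF_apply hp', h]

lemma prod_X_eq {F : Type*} [Field F] {σ : Type*} {k : ℕ} (p : Fin k → σ) :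
    (∏ j, (X (p j) : MvPolynomial σ F)) = monomial (diagF p) 1 := by
  classical
  rw [diagF]
  induction (univ : Finset (Fin k)) using Finset.induction_on with
  | empty => simp [monomial_zero']
  | insert _ _ ha ih =>
    rw [Finset.prod_insert ha, Finset.sum_insert ha, ih, ← pow_one (X _),
      X_pow_eq_monomial, monomial_mul, one_mul]

lemma pair_inj {ℓ ℓ' k : ℕ} {r : Fin k → Fin ℓ} {c : Fin k → Fin ℓ'}
    (hc : Function.Injective c) :
    Function.Injective fun i => (r i, c i) := fun _ _ h => hc (congrArg Prod.snd h)

section CoeffLemmas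
variable {F : Type*} [Field F] {ℓ ℓ' : ℕ}

lemma coeff_genMinor (D : (Fin ℓ × Fin ℓ') →₀ ℕ) (k' : ℕ)
    (r' : Fin k' → Fin ℓ) (c' : Fin k' → Fin ℓ') :
    coeff D (genMinor ℓ ℓ' k' r' c' : MvPolynomial (Fin ℓ × Fin ℓ') F)
      = ∑ σ : Equiv.Perm (Fin k'),
          (Equiv.Perm.sign σ : ℤ) •
            (if diagF (fun i => (r' (σ i), c' i)) = D then (1 : F) else 0) := by
  rw [genMinor, Matrix.det_apply', coeff_sum]
  refine Finset.sum_congr rfl fun σ _ => ?_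
  rw [show ((Equiv.Perm.sign σ : ℤ) : MvPolynomial (Fin ℓ × Fin ℓ') F)
        * ∏ i, (Matrix.of fun i j => (X (r' i, c' j) : MvPolynomial (Fin ℓ × Fin ℓ') F)) (σ i) i
      = (Equiv.Perm.sign σ : ℤ) • ∏ i, (X (r' (σ i), c' i) : MvPolynomial (Fin ℓ × Fin ℓ') F)
    from by rw [zsmul_eq_mul]; rfl]
  rw [prod_X_eq, coeff_smul, coeff_monomial]

lemma coeff_genMinor_self {k : ℕ} {r : Fin k → Fin ℓ} {c : Fin k → Fin ℓ'}
    (hr : Function.Injective r) (hc : Function.Injective c) :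
    coeff (diagF fun j => (r j, c j)) (genMinor ℓ ℓ' k r c : MvPolynomial (Fin ℓ × Fin ℓ') F)
      = 1 := by
  rw [coeff_genMinor]
  rw [Finset.sum_eq_single 1]
  · simp
  · intro σ _ hσ
    rw [if_neg, smul_zero]
    intro h
    rw [diagF_eq_iff (pair_inj hc) (pair_inj hc)] at h
    refine hσ (Equiv.ext fun i => ?_)
    have : ((r (σ i), c i) : Fin ℓ × Fin ℓ') ∈ image (fun j => (r j, c j)) univ := by
      rw [← h]; exact mem_image_of_mem _ (mem_univ i)
    obtain ⟨j, -, hj⟩ := mem_image.1 this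
    obtain ⟨hj1, hj2⟩ := Prod.mk.injEq .. ▸ hj
    have hji : j = i := hc hj2
    subst hji
    simpa using (hr hj1).symm
  · simp

lemma coeff_genMinor_ne {k k' : ℕ} {r : Fin k → Fin ℓ} {c : Fin k → Fin ℓ'}
    {r' : Fin k' → Fin ℓ} {c' : Fin k' → Fin ℓ'}
    (hc : Function.Injective c) (hc' : Function.Injective c')
    (h : image r univ ≠ image r' univ ∨ image c univ ≠ image c' univ) :
    coeff (diagF fun j => (r j, c j)) (genMinor ℓ ℓ' k' r' c' : MvPolynomial (Fin ℓ × Fin ℓ') F)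
      = 0 := by
  rw [coeff_genMinor]
  refine Finset.sum_eq_zero fun σ _ => ?_
  rw [if_neg, smul_zero]
  intro hd
  rw [diagF_eq_iff (pair_inj hc') (pair_inj hc)] at hd
  have h1 : image (r' ∘ ⇑σ) univ = image r univ := by
    have := congrArg (Finset.image Prod.fst) hd
    rwa [Finset.image_image, Finset.image_image] at this
  have h2 : image c' univ = image c univ := by
    have := congrArg (Finset.image Prod.snd) hd
    rwa [Finset.image_image, Finset.image_image] at this
  have h3 : image (r' ∘ ⇑σ) univ = image r' univ := by
    rw [show image (r' ∘ ⇑σ) univ = image r' (image ⇑σ univ) from (Finset.image_image ..).symm,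
      Finset.image_univ_equiv]
  rcases h with h | h
  · exact h (h3 ▸ h1).symm
  · exact h h2.symm

end CoeffLemmas

/-- Index type for the minors: pairs of subsets of rows and columns of equal size. -/
abbrev MIdx (ℓ ℓ' : ℕ) := {st : Finset (Fin ℓ) × Finset (Fin ℓ') // st.1.card = st.2.card}

/-- The minor indexed by an element of `MIdx`. -/
noncomputable def mphi (F : Type*) [Field F] (ℓ ℓ' : ℕ) (i : MIdx ℓ ℓ') :
    MvPolynomial (Fin ℓ × Fin ℓ') F :=
  genMinor ℓ ℓ' i.1.1.card (i.1.1.orderEmbOfFin rfl) (i.1.2.orderEmbOfFin i.2.symm)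

lemma image_orderEmbOfFin {α : Type*} [LinearOrder α] [DecidableEq α] (s : Finset α) {k : ℕ}
    (h : s.card = k) :
    image ⇑(s.orderEmbOfFin h) univ = s := by
  have := Finset.range_orderEmbOfFin s h
  rwa [← Set.image_univ, ← Finset.coe_univ, ← Finset.coe_image, Finset.coe_inj] at this

section Mphi
variable {F : Type*} [Field F] {ℓ ℓ' : ℕ}

lemma mphi_eq (s : Finset (Fin ℓ)) (t : Finset (Fin ℓ'))
    {k : ℕ} (hs : s.card = k) (ht : t.card = k) :
    mphi F ℓ ℓ' ⟨(s, t), hs.trans ht.symm⟩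
      = genMinor ℓ ℓ' k (s.orderEmbOfFin hs) (t.orderEmbOfFin ht) := by
  subst hs
  rfl

/-- The "diagonal" exponent of the minor indexed by `i`. -/
noncomputable def DIdx (ℓ ℓ' : ℕ) (i : MIdx ℓ ℓ') : (Fin ℓ × Fin ℓ') →₀ ℕ :=
  diagF fun j => (i.1.1.orderEmbOfFin rfl j, i.1.2.orderEmbOfFin i.2.symm j)

lemma coeff_mphi (i i' : MIdx ℓ ℓ') :
    coeff (DIdx ℓ ℓ' i) (mphi F ℓ ℓ' i') = if i' = i then 1 else 0 := by
  split
  · next h =>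
    subst h
    exact coeff_genMinor_self (i'.1.1.orderEmbOfFin rfl).injective
      (i'.1.2.orderEmbOfFin i'.2.symm).injective
  · next h =>
    refine coeff_genMinor_ne (i.1.2.orderEmbOfFin i.2.symm).injective
      (i'.1.2.orderEmbOfFin i'.2.symm).injective ?_
    rw [image_orderEmbOfFin, image_orderEmbOfFin, image_orderEmbOfFin, image_orderEmbOfFin]
    by_contra hcon
    push_neg at hcon
    exact h (Subtype.ext (Prod.ext hcon.1.symm hcon.2.symm))

lemma li_mphi : LinearIndependent F (mphi F ℓ ℓ') := by
  rw [Fintype.linearIndependent_iff]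
  intro g hg i
  have := congrArg (coeff (DIdx ℓ ℓ' i)) hg
  rw [coeff_sum] at this
  simp only [coeff_smul, coeff_mphi] at this
  simpa using this

lemma minorSet_eq_range : minorSet F ℓ ℓ' = Set.range (mphi F ℓ ℓ') := by
  ext p
  constructor
  · rintro ⟨k, r, c, hr, hc, rfl⟩
    have hs : (image r univ).card = k := by
      rw [card_image_of_injective _ hr.injective, card_univ, Fintype.card_fin]
    have ht : (image c univ).card = k := by
      rw [card_image_of_injective _ hc.injective, card_univ, Fintype.card_fin]
    refine ⟨⟨(image r univ, image c univ), hs.trans ht.symm⟩, ?_⟩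
    have hr' : r = ⇑((image r univ).orderEmbOfFin hs) :=
      orderEmbOfFin_unique hs (fun x => mem_image_of_mem r (mem_univ x)) hr
    have hc' : c = ⇑((image c univ).orderEmbOfFin ht) :=
      orderEmbOfFin_unique ht (fun x => mem_image_of_mem c (mem_univ x)) hc
    rw [mphi_eq _ _ hs ht, ← hr', ← hc']
  · rintro ⟨i, rfl⟩
    exact ⟨i.1.1.card, _, _, (i.1.1.orderEmbOfFin rfl).strictMono,
      (i.1.2.orderEmbOfFin i.2.symm).strictMono, rfl⟩

lemma genMinor_mem_restrictDegree {k : ℕ} {r : Fin k → Fin ℓ} {c : Fin k → Fin ℓ'}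
    (hc : Function.Injective c) (n : ℕ) (hn : 1 ≤ n) :
    (genMinor ℓ ℓ' k r c : MvPolynomial (Fin ℓ × Fin ℓ') F)
      ∈ restrictDegree (Fin ℓ × Fin ℓ') F n := by
  classical
  rw [mem_restrictDegree]
  intro m hm x
  rw [genMinor, Matrix.det_apply'] at hm
  have hm2 := MvPolynomial.support_sum hm
  obtain ⟨σ, -, hσ⟩ := Finset.mem_biUnion.1 hm2
  have he : ((Equiv.Perm.sign σ : ℤ) : MvPolynomial (Fin ℓ × Fin ℓ') F)
        * ∏ i, (Matrix.of fun i j => (X (r i, c j) : MvPolynomial (Fin ℓ × Fin ℓ') F)) (σ i) i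
      = monomial (diagF fun i => (r (σ i), c i)) (((Equiv.Perm.sign σ : ℤ) : F)) := by
    rw [show (∏ i, (Matrix.of fun i j => (X (r i, c j) : MvPolynomial (Fin ℓ × Fin ℓ') F)) (σ i) i)
        = ∏ i, (X (r (σ i), c i) : MvPolynomial (Fin ℓ × Fin ℓ') F) from rfl,
      prod_X_eq, ← zsmul_eq_mul, smul_monomial]
    norm_num
  rw [he] at hσ
  have := support_monomial_subset hσ
  rw [Finset.mem_singleton] at this
  subst this
  rw [diagF_apply (pair_inj hc)]
  split <;> omega

lemma evLM_apply (p : MvPolynomial (Fin ℓ × Fin ℓ') F) (P : Matrix (Fin ℓ) (Fin ℓ') F) :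
    evLM F ℓ ℓ' p P = eval (fun x : Fin ℓ × Fin ℓ' => P x.1 x.2) p := by
  show Pi.evalAlgHom F (fun _ => F) P
      (aeval (fun x : Fin ℓ × Fin ℓ' => fun P : Matrix (Fin ℓ) (Fin ℓ') F => P x.1 x.2) p) = _
  rw [comp_aeval_apply]
  rfl

end Mphi

lemma card_MIdx (ℓ ℓ' : ℕ) : Fintype.card (MIdx ℓ ℓ') = (ℓ + ℓ').choose ℓ := by
  classical
  rw [Fintype.card_congr (Equiv.subtypeProdEquivSigmaSubtype
    (fun (s : Finset (Fin ℓ)) (t : Finset (Fin ℓ')) => s.card = t.card))]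
  rw [Fintype.card_sigma]
  have h1 : ∀ s : Finset (Fin ℓ),
      Fintype.card {t : Finset (Fin ℓ') // s.card = t.card} = ℓ'.choose s.card := by
    intro s
    rw [Fintype.card_congr (Equiv.subtypeEquivRight fun t => eq_comm),
      Fintype.card_finset_len, Fintype.card_fin]
  simp only [h1]
  rw [show (univ : Finset (Finset (Fin ℓ))) = (univ : Finset (Fin ℓ)).powerset from
    Finset.powerset_univ.symm]
  rw [Finset.sum_powerset_apply_card (fun j => ℓ'.choose j)]
  rw [Nat.add_choose_eq, Finset.Nat.sum_antidiagonal_eq_sum_range_succ_mk]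
  rw [← Finset.sum_range_reflect]
  rw [card_univ, Fintype.card_fin]
  refine Finset.sum_congr rfl fun k hk => ?_
  rw [Finset.mem_range, Nat.lt_succ_iff] at hk
  rw [Nat.add_sub_cancel, smul_eq_mul, Nat.choose_symm hk]

universe u v in
lemma eq_zero_of_eval_eq_zero' {K : Type u} [Field K] [Fintype K] {σ : Type} [Finite σ]
    (p : MvPolynomial σ K) (h : ∀ w : σ → K, eval w p = 0)
    (hp : p ∈ restrictDegree σ K (Fintype.card K - 1)) : p = 0 := by
  classical
  set e : σ ≃ ULift.{u} σ := Equiv.ulift.symm with he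
  have hinj := MvPolynomial.rename_injective (R := K) (⇑e) e.injective
  apply hinj
  rw [map_zero]
  refine MvPolynomial.eq_zero_of_eval_eq_zero (ULift.{u} σ) K (rename (⇑e) p) ?_ ?_
  · intro w
    rw [MvPolynomial.eval_rename]
    exact h _
  · rw [mem_restrictDegree] at hp ⊢
    intro m hm i
    rw [MvPolynomial.support_rename_of_injective e.injective] at hm
    obtain ⟨d, hd, rfl⟩ := Finset.mem_image.1 hm
    have hi : Finsupp.mapDomain (⇑e) d i = d (e.symm i) := by
      conv_lhs => rw [(e.apply_symm_apply i).symm]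
      rw [Finsupp.mapDomain_apply e.injective]
    rw [hi]
    exact hp d hd _

/-- The affine Grassmann code is a nondegenerate linear code of length `q^(ℓℓ')`
and dimension `(ℓ+ℓ').choose ℓ`. -/
theorem affGrassCode_length_dim_nondegenerate (F : Type*) [Field F] [Fintype F] (q ℓ ℓ' : ℕ)
    (hq : Fintype.card F = q) (hℓ : 1 ≤ ℓ) (hℓℓ' : ℓ ≤ ℓ') :
    Fintype.card (Matrix (Fin ℓ) (Fin ℓ') F) = q ^ (ℓ * ℓ')
      ∧ Module.finrank F (affGrassCode F ℓ ℓ') = (ℓ + ℓ').choose ℓ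
      ∧ ∀ P : Matrix (Fin ℓ) (Fin ℓ') F, ∃ c ∈ affGrassCode F ℓ ℓ', c P ≠ 0 := by
  classical
  refine ⟨?_, ?_, ?_⟩
  · rw [show Fintype.card (Matrix (Fin ℓ) (Fin ℓ') F) = Fintype.card (Fin ℓ → Fin ℓ' → F) from
      rfl, Fintype.card_fun, Fintype.card_fun, hq, Fintype.card_fin, Fintype.card_fin, ← pow_mul,
      mul_comm ℓ' ℓ]
  · have hdisj : Disjoint (Submodule.span F (Set.range (mphi F ℓ ℓ')))
        (LinearMap.ker (evLM F ℓ ℓ')) := by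
      rw [Submodule.disjoint_def]
      intro x hx hker
      rw [LinearMap.mem_ker] at hker
      refine eq_zero_of_eval_eq_zero' x ?_ ?_
      · intro v
        have := congrFun hker (Matrix.of fun i j => v (i, j))
        rw [evLM_apply] at this
        simpa using this
      · have hle : Submodule.span F (Set.range (mphi F ℓ ℓ'))
            ≤ restrictDegree (Fin ℓ × Fin ℓ') F (Fintype.card F - 1) := by
          rw [Submodule.span_le]
          rintro p ⟨i, rfl⟩
          exact genMinor_mem_restrictDegree (i.1.2.orderEmbOfFin i.2.symm).injective _
            (by have := Fintype.one_lt_card (α := F); omega)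
        exact hle hx
    have hli2 : LinearIndependent F (⇑(evLM F ℓ ℓ') ∘ mphi F ℓ ℓ') := li_mphi.map hdisj
    have heq : affGrassCode F ℓ ℓ'
        = Submodule.span F (Set.range (⇑(evLM F ℓ ℓ') ∘ mphi F ℓ ℓ')) := by
      rw [affGrassCode, Submodule.map_span, minorSet_eq_range, ← Set.range_comp]
    rw [heq, finrank_span_eq_card hli2, card_MIdx]
  · intro P
    refine ⟨evLM F ℓ ℓ' 1, Submodule.mem_map_of_mem (Submodule.subset_span ?_), ?_⟩
    · exact ⟨0, Fin.elim0, Fin.elim0, fun a => a.elim0, fun a => a.elim0,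
        (Matrix.det_fin_zero).symm⟩
    · rw [show evLM F ℓ ℓ' 1 = 1 from map_one (aeval _)]
      exact one_ne_zero
end

section
/- The stabilizer in the group G(ℓ,m) = {φ_{u,A}} of the leading maximal minor L = det((X_{ij})_{1≤i,j≤ℓ}) has cardinality (q^{ℓ(ℓ'−ℓ)}/(q−1))·∏_{i=ℓ}^{ℓ'−1}(q^{ℓ'} − q^i)·∏_{j=0}^{ℓ−1}(q^ℓ − q^j). -/
open MvPolynomial Matrix

/-- The generic `ℓ × ℓ'` matrix of indeterminates. -/
noncomputable def genMatrixRect (F : Type*) [Field F] (ℓ ℓ' : ℕ) :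
    Matrix (Fin ℓ) (Fin ℓ') (MvPolynomial (Fin ℓ × Fin ℓ') F) :=
  Matrix.of fun i j => X (i, j)

open MvPolynomial Matrix

/-- The substitution `X ↦ X A⁻¹ + u` on polynomials in the entries of the generic
`ℓ × ℓ'` matrix, for `A ∈ GL_{ℓ'}(F)` and `u` an `ℓ × ℓ'` matrix over `F`. -/
noncomputable def affSubst (F : Type*) [Field F] (ℓ ℓ' : ℕ)
    (A : GL (Fin ℓ') F) (u : Matrix (Fin ℓ) (Fin ℓ') F) :
    MvPolynomial (Fin ℓ × Fin ℓ') F →ₐ[F] MvPolynomial (Fin ℓ × Fin ℓ') F :=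
  aeval (fun x : Fin ℓ × Fin ℓ' =>
    (∑ j, X (x.1, j) * C ((↑(A⁻¹) : Matrix (Fin ℓ') (Fin ℓ') F) j x.2)) + C (u x.1 x.2))

private lemma charmatrix_neg_eq {R : Type*} [CommRing R] {n : ℕ} (M : Matrix (Fin n) (Fin n) R) :
    (Polynomial.X : Polynomial R) • (1 : Matrix (Fin n) (Fin n) (Polynomial R))
      + M.map (Polynomial.C : R →+* Polynomial R) = charmatrix (-M) := by
  ext i j
  by_cases h : i = j
  · subst h
    simp [charmatrix_apply_eq, Matrix.smul_apply, Matrix.one_apply_eq, smul_eq_mul]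
  · simp [charmatrix_apply_ne _ _ _ h, Matrix.smul_apply, Matrix.one_apply_ne h, smul_eq_mul]

private lemma trace_stdBasisMatrix_mul {R : Type*} [CommRing R] {n : ℕ} [NeZero n]
    (a b : Fin n) (w : Matrix (Fin n) (Fin n) R) :
    (Matrix.single b a (1 : R) * w).trace = w a b := by
  simp [Matrix.trace, Matrix.diag, Matrix.mul_apply, Matrix.single, ite_and,
    Finset.sum_ite_eq]

private lemma shift_eq_zero {F : Type*} [Field F] {ℓ : ℕ} (hℓ : 1 ≤ ℓ)
    (v : Matrix (Fin ℓ) (Fin ℓ) F)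
    (h : ∀ N : Matrix (Fin ℓ) (Fin ℓ) (Polynomial (RatFunc F)),
      (N + v.map (algebraMap F (Polynomial (RatFunc F)))).det = N.det) :
    v = 0 := by
  have hne : NeZero ℓ := ⟨by omega⟩
  set S := RatFunc F with hS
  set w : Matrix (Fin ℓ) (Fin ℓ) S := v.map (algebraMap F S) with hw
  have hmap : v.map (algebraMap F (Polynomial S)) = w.map (Polynomial.C : S →+* Polynomial S) := by
    ext i j
    simp [Matrix.map_apply, IsScalarTower.algebraMap_apply F S (Polynomial S),
      Polynomial.algebraMap_eq]
    rfl
  have key : ∀ Q : Matrix (Fin ℓ) (Fin ℓ) S, IsUnit Q.det → (Q * w).trace = 0 := by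
    intro Q hQ
    have h1 := h ((Polynomial.X : Polynomial S) • (Q⁻¹).map (Polynomial.C : S →+* Polynomial S))
    rw [hmap] at h1
    have hL : (Polynomial.X : Polynomial S) • (Q⁻¹).map (Polynomial.C : S →+* Polynomial S)
        + w.map (Polynomial.C : S →+* Polynomial S)
        = (Q⁻¹).map (Polynomial.C : S →+* Polynomial S) * charmatrix (-(Q * w)) := by
      rw [← charmatrix_neg_eq, Matrix.mul_add, Matrix.mul_smul, Matrix.mul_one,
        ← Matrix.map_mul, ← Matrix.mul_assoc, Matrix.nonsing_inv_mul _ hQ, Matrix.one_mul]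
    rw [hL] at h1
    have hdetQi : ((Q⁻¹).map (Polynomial.C : S →+* Polynomial S)).det
        = Polynomial.C (Q⁻¹.det) := ((Polynomial.C : S →+* Polynomial S).map_det _).symm
    rw [Matrix.det_mul, hdetQi, Matrix.det_smul, Fintype.card_fin, hdetQi] at h1
    have hC0 : (Polynomial.C (Q⁻¹.det) : Polynomial S) ≠ 0 := by
      simpa using (Matrix.isUnit_nonsing_inv_det _ hQ).ne_zero
    have hcp : (-(Q * w)).charpoly = Polynomial.X ^ ℓ := by
      apply mul_left_cancel₀ hC0
      rw [show (-(Q * w)).charpoly = (charmatrix (-(Q * w))).det from rfl, h1]; ring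
    have := Matrix.trace_eq_neg_charpoly_coeff (-(Q * w))
    rw [hcp, Fintype.card_fin, Polynomial.coeff_X_pow] at this
    have hne' : ¬ (ℓ - 1 = ℓ) := by omega
    rw [if_neg hne'] at this
    simpa using this
  have h0 : w.trace = 0 := by simpa using key 1 (by simp)
  have hoff : ∀ a b, a ≠ b → w a b = 0 := by
    intro a b hab
    have hk := key (1 + Matrix.single b a (1 : S)) (by
      have : (1 + Matrix.single b a (1 : S)) = Matrix.transvection b a 1 := rfl
      rw [this, Matrix.det_transvection_of_ne b a (Ne.symm hab) 1]
      exact isUnit_one)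
    rw [Matrix.add_mul, Matrix.one_mul, Matrix.trace_add, h0, zero_add,
      trace_stdBasisMatrix_mul] at hk
    exact hk
  have hdiag : ∀ a, w a a = 0 := by
    intro a
    set t : S := RatFunc.X with ht
    have hk := key (Matrix.diagonal (fun i => if i = a then t else 1)) (by
      rw [Matrix.det_diagonal, Finset.prod_ite_eq' Finset.univ a (fun _ => t)]
      simp only [Finset.mem_univ, if_true, isUnit_iff_ne_zero]
      exact isUnit_iff_ne_zero.mpr RatFunc.X_ne_zero)
    have hexp : (Matrix.diagonal (fun i => if i = a then t else 1) * w).trace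
        = (t - 1) * w a a + w.trace := by
      have hd : ∀ i, (Matrix.diagonal (fun i => if i = a then t else 1) * w) i i
          = (if i = a then t else 1) * w i i := fun i => Matrix.diagonal_mul _ _ _ _
      rw [show (Matrix.diagonal (fun i => if i = a then t else 1) * w).trace
          = ∑ i, (if i = a then t else 1) * w i i from Finset.sum_congr rfl (fun i _ => hd i),
        show w.trace = ∑ i, w i i from rfl]
      have : ∀ i, (if i = a then t else 1) * w i i
          = (if i = a then (t - 1) * w a a else 0) + w i i := by
        intro i
        by_cases hia : i = a
        · subst hia; simp; ring
        · simp [hia]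
      rw [Finset.sum_congr rfl (fun i _ => this i), Finset.sum_add_distrib,
        Finset.sum_ite_eq' Finset.univ a (fun _ => (t - 1) * w a a)]
      simp
    rw [hexp, h0, add_zero] at hk
    have htne : t - 1 ≠ 0 := by
      have h1 : (algebraMap (Polynomial F) S) (Polynomial.X - 1) = t - 1 := by
        rw [map_sub, RatFunc.algebraMap_X, _root_.map_one]
      rw [← h1]
      intro hcon
      have h2 := IsFractionRing.injective (Polynomial F) S
        (by rw [hcon, map_zero] : (algebraMap (Polynomial F) S) (Polynomial.X - 1) = algebraMap (Polynomial F) S 0)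
      simpa using congrArg Polynomial.natDegree (sub_eq_zero.mp h2)
    exact (mul_eq_zero.mp hk).resolve_left htne
  have hwz : w = 0 := by
    ext a b
    rcases eq_or_ne a b with rfl | hab
    · simpa using hdiag a
    · simpa using hoff a b hab
  ext a b
  have := congrFun (congrFun hwz a) b
  simp only [hw, Matrix.map_apply, Matrix.zero_apply] at this
  simpa using (algebraMap F S).injective (by simpa using this)



section helpers

variable {R : Type*} [CommRing R] {ℓ ℓ' : ℕ} (hℓℓ' : ℓ ≤ ℓ')

private lemma aux_sub_one :
    ((1 : Matrix (Fin ℓ') (Fin ℓ') R).submatrix (Fin.castLE hℓℓ') (Fin.castLE hℓℓ')) = 1 := by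
  ext i j
  simp [Matrix.submatrix_apply, Matrix.one_apply, Fin.castLE_inj]

private lemma aux_mul_sub_col {α β : Type*} [Fintype β] (M : Matrix α β R)
    (N : Matrix β (Fin ℓ') R) :
    (M * N).submatrix id (Fin.castLE hℓℓ') = M * (N.submatrix id (Fin.castLE hℓℓ')) := by
  ext i k
  simp [Matrix.mul_apply]

private lemma aux_one_sub_mul (M : Matrix (Fin ℓ') (Fin ℓ') R) :
    ((1 : Matrix (Fin ℓ') (Fin ℓ') R).submatrix (Fin.castLE hℓℓ') id) * M
      = M.submatrix (Fin.castLE hℓℓ') id := by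
  ext i j
  simp [Matrix.mul_apply, Matrix.one_apply]

private lemma aux_mul_one_sub {α : Type*} [Fintype α] (M : Matrix α (Fin ℓ') R) :
    M * ((1 : Matrix (Fin ℓ') (Fin ℓ') R).submatrix id (Fin.castLE hℓℓ'))
      = M.submatrix id (Fin.castLE hℓℓ') := by
  ext i j
  simp [Matrix.mul_apply, Matrix.one_apply]

end helpers

section main

variable {F : Type*} [Field F] {ℓ ℓ' : ℕ} (hℓℓ' : ℓ ≤ ℓ')
  (A : GL (Fin ℓ') F) (u : Matrix (Fin ℓ) (Fin ℓ') F)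

private lemma affSubst_det_eq :
    affSubst F ℓ ℓ' A u (((genMatrixRect F ℓ ℓ').submatrix id (Fin.castLE hℓℓ')).det)
      = (((genMatrixRect F ℓ ℓ') * ((↑(A⁻¹) : Matrix (Fin ℓ') (Fin ℓ') F)).map
            (MvPolynomial.C : F →+* MvPolynomial (Fin ℓ × Fin ℓ') F)
          + u.map MvPolynomial.C).submatrix id (Fin.castLE hℓℓ')).det := by
  rw [AlgHom.map_det]
  congr 1
  ext i k
  simp [affSubst, genMatrixRect, Matrix.mul_apply, Matrix.submatrix_apply, Matrix.map_apply,
    aeval_X]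

private lemma eval_identity
    (hC : affSubst F ℓ ℓ' A u (((genMatrixRect F ℓ ℓ').submatrix id (Fin.castLE hℓℓ')).det)
      = ((genMatrixRect F ℓ ℓ').submatrix id (Fin.castLE hℓℓ')).det)
    (R : Type*) [CommRing R] [Algebra F R] (Y : Matrix (Fin ℓ) (Fin ℓ') R) :
    ((Y * ((↑(A⁻¹) : Matrix (Fin ℓ') (Fin ℓ') F)).map (algebraMap F R)
        + u.map (algebraMap F R)).submatrix id (Fin.castLE hℓℓ')).det
      = (Y.submatrix id (Fin.castLE hℓℓ')).det := by
  rw [affSubst_det_eq hℓℓ'] at hC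
  have h2 := congrArg (aeval (R := F) (S₁ := R) (fun p : Fin ℓ × Fin ℓ' => Y p.1 p.2)) hC
  rw [AlgHom.map_det, AlgHom.map_det] at h2
  simp only [AlgHom.mapMatrix_apply] at h2
  have e1 : (((genMatrixRect F ℓ ℓ') * ((↑(A⁻¹) : Matrix (Fin ℓ') (Fin ℓ') F)).map
        (MvPolynomial.C : F →+* MvPolynomial (Fin ℓ × Fin ℓ') F)
        + u.map MvPolynomial.C).submatrix id (Fin.castLE hℓℓ')).map
          (aeval (R := F) (S₁ := R) (fun p : Fin ℓ × Fin ℓ' => Y p.1 p.2))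
      = (Y * ((↑(A⁻¹) : Matrix (Fin ℓ') (Fin ℓ') F)).map (algebraMap F R)
        + u.map (algebraMap F R)).submatrix id (Fin.castLE hℓℓ') := by
    ext i k
    simp [genMatrixRect, Matrix.mul_apply, Matrix.submatrix_apply, Matrix.map_apply,
      map_sum, aeval_X]
  have e2 : (((genMatrixRect F ℓ ℓ')).submatrix id (Fin.castLE hℓℓ')).map
        (aeval (R := F) (S₁ := R) (fun p : Fin ℓ × Fin ℓ' => Y p.1 p.2))
      = Y.submatrix id (Fin.castLE hℓℓ') := by
    ext i k
    simp [genMatrixRect, Matrix.submatrix_apply, Matrix.map_apply, aeval_X]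
  rw [e1, e2] at h2
  exact h2

private lemma SL0
    (hC : affSubst F ℓ ℓ' A u (((genMatrixRect F ℓ ℓ').submatrix id (Fin.castLE hℓℓ')).det)
      = ((genMatrixRect F ℓ ℓ').submatrix id (Fin.castLE hℓℓ')).det)
    (R : Type*) [CommRing R] [Algebra F R] (Y₁ : Matrix (Fin ℓ) (Fin ℓ) R) :
    (Y₁ * (((↑(A⁻¹) : Matrix (Fin ℓ') (Fin ℓ') F)).submatrix (Fin.castLE hℓℓ')
          (Fin.castLE hℓℓ')).map (algebraMap F R)
        + (u.submatrix id (Fin.castLE hℓℓ')).map (algebraMap F R)).det = Y₁.det := by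
  classical
  have h := eval_identity hℓℓ' A u hC R
    (Y₁ * ((1 : Matrix (Fin ℓ') (Fin ℓ') R).submatrix (Fin.castLE hℓℓ') id))
  have hYsub : (Y₁ * ((1 : Matrix (Fin ℓ') (Fin ℓ') R).submatrix (Fin.castLE hℓℓ') id)).submatrix
      id (Fin.castLE hℓℓ') = Y₁ := by
    rw [aux_mul_sub_col hℓℓ', Matrix.submatrix_submatrix]
    rw [show ((1 : Matrix (Fin ℓ') (Fin ℓ') R).submatrix ((Fin.castLE hℓℓ') ∘ id)
      (id ∘ (Fin.castLE hℓℓ'))) = 1 from aux_sub_one hℓℓ', Matrix.mul_one]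
  have hMain : ((Y₁ * ((1 : Matrix (Fin ℓ') (Fin ℓ') R).submatrix (Fin.castLE hℓℓ') id))
        * ((↑(A⁻¹) : Matrix (Fin ℓ') (Fin ℓ') F)).map (algebraMap F R)
        + u.map (algebraMap F R)).submatrix id (Fin.castLE hℓℓ')
      = Y₁ * ((((↑(A⁻¹) : Matrix (Fin ℓ') (Fin ℓ') F)).submatrix (Fin.castLE hℓℓ')
          (Fin.castLE hℓℓ')).map (algebraMap F R))
        + (u.submatrix id (Fin.castLE hℓℓ')).map (algebraMap F R) := by
    rw [Matrix.submatrix_add]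
    simp only [Pi.add_apply]
    rw [Matrix.mul_assoc, aux_mul_sub_col hℓℓ', aux_one_sub_mul hℓℓ',
      Matrix.submatrix_submatrix, Matrix.submatrix_map, Matrix.submatrix_map]
    rfl
  rw [hMain, hYsub] at h
  exact h

private lemma SLgen
    (hC : affSubst F ℓ ℓ' A u (((genMatrixRect F ℓ ℓ').submatrix id (Fin.castLE hℓℓ')).det)
      = ((genMatrixRect F ℓ ℓ').submatrix id (Fin.castLE hℓℓ')).det)
    (R : Type*) [CommRing R] [Algebra F R] (Y₁ : Matrix (Fin ℓ) (Fin ℓ) R)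
    (c : Fin ℓ → F) (j₀ : Fin ℓ') (hj₀ : ℓ ≤ (j₀ : ℕ)) :
    (Y₁ * (((↑(A⁻¹) : Matrix (Fin ℓ') (Fin ℓ') F)).submatrix (Fin.castLE hℓℓ')
          (Fin.castLE hℓℓ')).map (algebraMap F R)
        + (Matrix.of fun i k => c i * (↑(A⁻¹) : Matrix (Fin ℓ') (Fin ℓ') F) j₀
            (Fin.castLE hℓℓ' k)).map (algebraMap F R)
        + (u.submatrix id (Fin.castLE hℓℓ')).map (algebraMap F R)).det = Y₁.det := by
  classical
  have h := eval_identity hℓℓ' A u hC R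
    (Y₁ * ((1 : Matrix (Fin ℓ') (Fin ℓ') R).submatrix (Fin.castLE hℓℓ') id)
      + Matrix.of (fun i j => if j = j₀ then algebraMap F R (c i) else 0))
  have hek : ∀ k : Fin ℓ, Fin.castLE hℓℓ' k ≠ j₀ := by
    intro k hk
    have hv : ((Fin.castLE hℓℓ' k : Fin ℓ') : ℕ) = (k : ℕ) := rfl
    rw [hk] at hv
    omega
  have hΔsub : (Matrix.of (fun i j => if j = j₀ then algebraMap F R (c i) else 0)).submatrix
      id (Fin.castLE hℓℓ') = 0 := by
    ext i k
    simp [Matrix.submatrix_apply, hek k]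
  have hΔmul : ((Matrix.of (fun i j => if j = j₀ then algebraMap F R (c i) else 0))
        * ((↑(A⁻¹) : Matrix (Fin ℓ') (Fin ℓ') F)).map (algebraMap F R)).submatrix
        id (Fin.castLE hℓℓ')
      = (Matrix.of fun i k => c i * (↑(A⁻¹) : Matrix (Fin ℓ') (Fin ℓ') F) j₀
            (Fin.castLE hℓℓ' k)).map (algebraMap F R) := by
    ext i k
    simp only [Matrix.submatrix_apply, Matrix.mul_apply, Matrix.of_apply, Matrix.map_apply,
      ite_mul, zero_mul, id_eq, Finset.sum_ite_eq', Finset.mem_univ, if_true, _root_.map_mul]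
  have hYsub : (Y₁ * ((1 : Matrix (Fin ℓ') (Fin ℓ') R).submatrix (Fin.castLE hℓℓ') id)
        + Matrix.of (fun i j => if j = j₀ then algebraMap F R (c i) else 0)).submatrix
      id (Fin.castLE hℓℓ') = Y₁ := by
    rw [Matrix.submatrix_add]
    simp only [Pi.add_apply]
    rw [hΔsub, add_zero, aux_mul_sub_col hℓℓ', Matrix.submatrix_submatrix]
    rw [show ((1 : Matrix (Fin ℓ') (Fin ℓ') R).submatrix ((Fin.castLE hℓℓ') ∘ id)
      (id ∘ (Fin.castLE hℓℓ'))) = 1 from aux_sub_one hℓℓ', Matrix.mul_one]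
  have hMain : ((Y₁ * ((1 : Matrix (Fin ℓ') (Fin ℓ') R).submatrix (Fin.castLE hℓℓ') id)
        + Matrix.of (fun i j => if j = j₀ then algebraMap F R (c i) else 0))
        * ((↑(A⁻¹) : Matrix (Fin ℓ') (Fin ℓ') F)).map (algebraMap F R)
        + u.map (algebraMap F R)).submatrix id (Fin.castLE hℓℓ')
      = Y₁ * ((((↑(A⁻¹) : Matrix (Fin ℓ') (Fin ℓ') F)).submatrix (Fin.castLE hℓℓ')
          (Fin.castLE hℓℓ')).map (algebraMap F R))
        + (Matrix.of fun i k => c i * (↑(A⁻¹) : Matrix (Fin ℓ') (Fin ℓ') F) j₀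
            (Fin.castLE hℓℓ' k)).map (algebraMap F R)
        + (u.submatrix id (Fin.castLE hℓℓ')).map (algebraMap F R) := by
    rw [Matrix.add_mul, Matrix.submatrix_add, Matrix.submatrix_add]
    simp only [Pi.add_apply]
    rw [hΔmul, Matrix.mul_assoc, aux_mul_sub_col hℓℓ', aux_one_sub_mul hℓℓ',
      Matrix.submatrix_submatrix, Matrix.submatrix_map, Matrix.submatrix_map]
    rfl
  rw [hMain, hYsub] at h
  exact h

end main


section generic

variable {F : Type*} [Field F] {ℓ : ℕ}

private lemma dagger_generic (C₀ w : Matrix (Fin ℓ) (Fin ℓ) F)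
    (hU : IsUnit C₀.det) (R : Type*) [CommRing R] [Algebra F R]
    (h : ∀ N : Matrix (Fin ℓ) (Fin ℓ) R,
      (N * C₀.map (algebraMap F R) + w.map (algebraMap F R)).det = N.det)
    (N : Matrix (Fin ℓ) (Fin ℓ) R) :
    (N + w.map (algebraMap F R)).det = N.det * algebraMap F R (C₀⁻¹.det) := by
  have h1 := h (N * ((C₀⁻¹).map (algebraMap F R)))
  rw [Matrix.mul_assoc, ← Matrix.map_mul, Matrix.nonsing_inv_mul _ hU,
    Matrix.map_one _ (map_zero _) (_root_.map_one _), Matrix.mul_one, Matrix.det_mul] at h1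
  have hd : ((C₀⁻¹).map (algebraMap F R)).det = algebraMap F R ((C₀⁻¹).det) :=
    ((algebraMap F R).map_det _).symm
  rw [hd] at h1
  exact h1

private lemma generic_main (hℓ : 1 ≤ ℓ) (C₀ w : Matrix (Fin ℓ) (Fin ℓ) F)
    (h0 : ∀ N : Matrix (Fin ℓ) (Fin ℓ) (Polynomial (RatFunc F)),
      (N * C₀.map (algebraMap F (Polynomial (RatFunc F)))
        + w.map (algebraMap F (Polynomial (RatFunc F)))).det = N.det)
    (hX : ∀ N : Matrix (Fin ℓ) (Fin ℓ) (Polynomial F),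
      (N * C₀.map (algebraMap F (Polynomial F))
        + w.map (algebraMap F (Polynomial F))).det = N.det) :
    C₀.det = 1 ∧ w = 0 := by
  classical
  -- step 1 : C₀ is invertible
  have hU : IsUnit C₀.det := by
    by_contra hU
    have hdet0 : C₀.det = 0 := by
      by_contra hne
      exact hU (isUnit_iff_ne_zero.mpr hne)
    obtain ⟨wv, hw0, hwmul⟩ := Matrix.exists_vecMul_eq_zero_iff.mpr hdet0
    have hY₀C : (Matrix.of (fun (_ : Fin ℓ) k => wv k)) * C₀ = 0 := by
      ext i j
      have := congrFun hwmul j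
      simpa [Matrix.mul_apply, Matrix.vecMul, dotProduct] using this
    have hsh : ∀ N : Matrix (Fin ℓ) (Fin ℓ) (Polynomial (RatFunc F)),
        (N + (Matrix.of (fun (_ : Fin ℓ) k => wv k)).map
          (algebraMap F (Polynomial (RatFunc F)))).det = N.det := by
      intro N
      have h1 := h0 (N + (Matrix.of (fun (_ : Fin ℓ) k => wv k)).map
        (algebraMap F (Polynomial (RatFunc F))))
      have h2 := h0 N
      rw [Matrix.add_mul] at h1
      have hz : ((Matrix.of (fun (_ : Fin ℓ) k => wv k)).map
            (algebraMap F (Polynomial (RatFunc F))))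
          * (C₀.map (algebraMap F (Polynomial (RatFunc F)))) = 0 := by
        rw [← Matrix.map_mul, hY₀C]
        ext i j
        simp
      rw [hz, add_zero] at h1
      exact h1.symm.trans h2
    have hY0 := shift_eq_zero hℓ _ hsh
    exact hw0 (funext fun k => congrFun (congrFun hY0 ⟨0, hℓ⟩) k)
  -- step 2 : det C₀⁻¹ = 1
  have hdet1 : (C₀⁻¹).det = 1 := by
    have hPd := dagger_generic C₀ w hU (Polynomial F) hX
      ((Polynomial.X : Polynomial F) • (1 : Matrix (Fin ℓ) (Fin ℓ) (Polynomial F)))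
    have hmap : w.map (algebraMap F (Polynomial F))
        = w.map (Polynomial.C : F →+* Polynomial F) := by
      ext i j
      simp [Polynomial.algebraMap_eq]
    rw [hmap, show (Polynomial.X : Polynomial F) • (1 : Matrix (Fin ℓ) (Fin ℓ) (Polynomial F))
        + w.map (Polynomial.C : F →+* Polynomial F) = charmatrix (-w)
      from charmatrix_neg_eq w, Matrix.det_smul, Fintype.card_fin, Matrix.det_one, mul_one,
      Polynomial.algebraMap_eq] at hPd
    have hcp : (-w).charpoly = Polynomial.X ^ ℓ * Polynomial.C ((C₀⁻¹).det) := by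
      rw [show (-w).charpoly = (charmatrix (-w)).det from rfl, hPd]
    have hcoeff : (-w).charpoly.coeff ℓ
        = (Polynomial.X ^ ℓ * Polynomial.C ((C₀⁻¹).det)).coeff ℓ := by rw [hcp]
    have hmonic := (-w).charpoly_monic
    have hnd : (-w).charpoly.natDegree = ℓ := by
      rw [Matrix.charpoly_natDegree_eq_dim, Fintype.card_fin]
    rw [mul_comm, Polynomial.coeff_C_mul, Polynomial.coeff_X_pow, if_pos rfl, mul_one] at hcoeff
    have h1 := hmonic.coeff_natDegree
    rw [hnd] at h1
    rw [← hcoeff]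
    exact h1
  have hdetC₀ : C₀.det = 1 := by
    have := Matrix.det_mul C₀ C₀⁻¹
    rw [Matrix.mul_nonsing_inv _ hU, Matrix.det_one, hdet1, mul_one] at this
    exact this.symm
  refine ⟨hdetC₀, ?_⟩
  apply shift_eq_zero hℓ w
  intro N
  have := dagger_generic C₀ w hU (Polynomial (RatFunc F)) h0 N
  rwa [hdet1, _root_.map_one, mul_one] at this

end generic

section char

variable {F : Type*} [Field F] {ℓ ℓ' : ℕ}

private lemma char_backward (hℓ : 1 ≤ ℓ) (hℓℓ' : ℓ ≤ ℓ')
    (A : GL (Fin ℓ') F) (u : Matrix (Fin ℓ) (Fin ℓ') F)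
    (hC : affSubst F ℓ ℓ' A u (((genMatrixRect F ℓ ℓ').submatrix id (Fin.castLE hℓℓ')).det)
      = ((genMatrixRect F ℓ ℓ').submatrix id (Fin.castLE hℓℓ')).det) :
    (((↑(A⁻¹) : Matrix (Fin ℓ') (Fin ℓ') F)).submatrix (Fin.castLE hℓℓ')
        (Fin.castLE hℓℓ')).det = 1
    ∧ (∀ (j₀ : Fin ℓ') (k : Fin ℓ), ℓ ≤ (j₀ : ℕ) →
        (↑(A⁻¹) : Matrix (Fin ℓ') (Fin ℓ') F) j₀ (Fin.castLE hℓℓ' k) = 0)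
    ∧ u.submatrix id (Fin.castLE hℓℓ') = 0 := by
  classical
  obtain ⟨hdet, hu0⟩ := generic_main hℓ
    (((↑(A⁻¹) : Matrix (Fin ℓ') (Fin ℓ') F)).submatrix (Fin.castLE hℓℓ') (Fin.castLE hℓℓ'))
    (u.submatrix id (Fin.castLE hℓℓ'))
    (fun N => SL0 hℓℓ' A u hC _ N) (fun N => SL0 hℓℓ' A u hC _ N)
  refine ⟨hdet, ?_, hu0⟩
  intro j₀ k hj₀
  have hz1 : (u.submatrix id (Fin.castLE hℓℓ')).map (algebraMap F (Polynomial (RatFunc F))) = 0 := by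
    rw [hu0]; ext i j; simp
  have hz2 : (u.submatrix id (Fin.castLE hℓℓ')).map (algebraMap F (Polynomial F)) = 0 := by
    rw [hu0]; ext i j; simp
  obtain ⟨-, hv0⟩ := generic_main hℓ
    (((↑(A⁻¹) : Matrix (Fin ℓ') (Fin ℓ') F)).submatrix (Fin.castLE hℓℓ') (Fin.castLE hℓℓ'))
    (Matrix.of fun i k' => (fun _ : Fin ℓ => (1 : F)) i
        * (↑(A⁻¹) : Matrix (Fin ℓ') (Fin ℓ') F) j₀ (Fin.castLE hℓℓ' k'))
    (fun N => by
      have h := SLgen hℓℓ' A u hC _ N (fun _ => (1 : F)) j₀ hj₀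
      rwa [hz1, add_zero] at h)
    (fun N => by
      have h := SLgen hℓℓ' A u hC _ N (fun _ => (1 : F)) j₀ hj₀
      rwa [hz2, add_zero] at h)
  have := congrFun (congrFun hv0 ⟨0, hℓ⟩) k
  simpa using this

private lemma char_forward (hℓℓ' : ℓ ≤ ℓ')
    (A : GL (Fin ℓ') F) (u : Matrix (Fin ℓ) (Fin ℓ') F)
    (hdet : (((↑(A⁻¹) : Matrix (Fin ℓ') (Fin ℓ') F)).submatrix (Fin.castLE hℓℓ')
        (Fin.castLE hℓℓ')).det = 1)
    (hlow : ∀ (j₀ : Fin ℓ') (k : Fin ℓ), ℓ ≤ (j₀ : ℕ) →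
        (↑(A⁻¹) : Matrix (Fin ℓ') (Fin ℓ') F) j₀ (Fin.castLE hℓℓ' k) = 0)
    (hu : u.submatrix id (Fin.castLE hℓℓ') = 0) :
    affSubst F ℓ ℓ' A u (((genMatrixRect F ℓ ℓ').submatrix id (Fin.castLE hℓℓ')).det)
      = ((genMatrixRect F ℓ ℓ').submatrix id (Fin.castLE hℓℓ')).det := by
  classical
  rw [affSubst_det_eq hℓℓ']
  have hB1 : (↑(A⁻¹) : Matrix (Fin ℓ') (Fin ℓ') F).submatrix id (Fin.castLE hℓℓ')
      = ((1 : Matrix (Fin ℓ') (Fin ℓ') F).submatrix id (Fin.castLE hℓℓ'))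
        * ((↑(A⁻¹) : Matrix (Fin ℓ') (Fin ℓ') F).submatrix (Fin.castLE hℓℓ')
            (Fin.castLE hℓℓ')) := by
    ext j k
    simp only [Matrix.submatrix_apply, Matrix.mul_apply, Matrix.one_apply, ite_mul, zero_mul,
      one_mul, id_eq]
    rcases lt_or_ge (j : ℕ) ℓ with hj | hj
    · have hcond : ∀ m : Fin ℓ, (j = Fin.castLE hℓℓ' m) ↔ (m = ⟨(j : ℕ), hj⟩) := by
        intro m
        simp only [Fin.ext_iff, Fin.coe_castLE]
        omega
      simp_rw [hcond]
      rw [Finset.sum_ite_eq' Finset.univ (⟨(j : ℕ), hj⟩ : Fin ℓ)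
        (fun m => (↑(A⁻¹) : Matrix (Fin ℓ') (Fin ℓ') F) (Fin.castLE hℓℓ' m) (Fin.castLE hℓℓ' k))]
      simp only [Finset.mem_univ, if_true]
      exact congrArg (fun z => (↑(A⁻¹) : Matrix (Fin ℓ') (Fin ℓ') F) z (Fin.castLE hℓℓ' k)) ((hcond _).mpr rfl)
    · rw [hlow j k hj]
      symm
      apply Finset.sum_eq_zero
      intro m _
      have : j ≠ Fin.castLE hℓℓ' m := by
        intro hjm
        have : (j : ℕ) = (m : ℕ) := by rw [hjm]; rfl
        have := m.isLt
        omega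
      simp [this]
  have hmat : ((genMatrixRect F ℓ ℓ') * ((↑(A⁻¹) : Matrix (Fin ℓ') (Fin ℓ') F)).map
        (MvPolynomial.C : F →+* MvPolynomial (Fin ℓ × Fin ℓ') F)
        + u.map MvPolynomial.C).submatrix id (Fin.castLE hℓℓ')
      = ((genMatrixRect F ℓ ℓ').submatrix id (Fin.castLE hℓℓ'))
        * (((↑(A⁻¹) : Matrix (Fin ℓ') (Fin ℓ') F)).submatrix (Fin.castLE hℓℓ')
            (Fin.castLE hℓℓ')).map (MvPolynomial.C : F →+* MvPolynomial (Fin ℓ × Fin ℓ') F) := by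
    rw [Matrix.submatrix_add]
    simp only [Pi.add_apply]
    have hu' : (u.map (MvPolynomial.C : F →+* MvPolynomial (Fin ℓ × Fin ℓ') F)).submatrix id
        (Fin.castLE hℓℓ') = 0 := by
      rw [Matrix.submatrix_map, hu]
      ext i j
      simp
    rw [hu', add_zero, aux_mul_sub_col hℓℓ', Matrix.submatrix_map, hB1, Matrix.map_mul]
    have h1 : ((1 : Matrix (Fin ℓ') (Fin ℓ') F).submatrix id (Fin.castLE hℓℓ')).map
        (MvPolynomial.C : F →+* MvPolynomial (Fin ℓ × Fin ℓ') F)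
        = (1 : Matrix (Fin ℓ') (Fin ℓ') (MvPolynomial (Fin ℓ × Fin ℓ') F)).submatrix id
            (Fin.castLE hℓℓ') := by
      rw [← Matrix.submatrix_map, Matrix.map_one _ (map_zero _) (_root_.map_one _)]
    rw [h1, ← Matrix.mul_assoc, aux_mul_one_sub hℓℓ']
  rw [hmat, Matrix.det_mul]
  have : ((((↑(A⁻¹) : Matrix (Fin ℓ') (Fin ℓ') F)).submatrix (Fin.castLE hℓℓ')
      (Fin.castLE hℓℓ')).map (MvPolynomial.C : F →+* MvPolynomial (Fin ℓ × Fin ℓ') F)).det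
      = 1 := by
    rw [← RingHom.mapMatrix_apply, ← RingHom.map_det, hdet, _root_.map_one]
  rw [this, mul_one]

end char

section countingx

private lemma card_SL {F : Type*} [Field F] [Fintype F] {n : ℕ} (hn : 1 ≤ n) :
    Nat.card (GL (Fin n) F)
      = (Nat.card F - 1) * Nat.card {C : Matrix (Fin n) (Fin n) F // C.det = 1} := by
  classical
  set φ : GL (Fin n) F →* Fˣ := Matrix.GeneralLinearGroup.det with hφ
  have hsurj : Function.Surjective φ := by
    intro c
    set d : Fin n → F := fun i => if i = ⟨0, hn⟩ then (c : F) else 1 with hd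
    have hdet : (Matrix.diagonal d).det = (c : F) := by
      rw [Matrix.det_diagonal, hd, Finset.prod_ite_eq' Finset.univ (⟨0, hn⟩ : Fin n)
        (fun _ => (c : F))]
      simp
    have hU : IsUnit (Matrix.diagonal d).det := by
      rw [hdet]; exact c.isUnit
    refine ⟨Matrix.nonsingInvUnit (Matrix.diagonal d) hU, ?_⟩
    apply Units.ext
    simpa [hφ, Matrix.nonsingInvUnit] using hdet
  have hker : Nat.card (MonoidHom.ker φ)
      = Nat.card {C : Matrix (Fin n) (Fin n) F // C.det = 1} := by
    have f : ∀ x : MonoidHom.ker φ, ((↑(↑x : GL (Fin n) F) : Matrix (Fin n) (Fin n) F)).det = 1 := by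
      intro x
      have hx := x.2
      rw [MonoidHom.mem_ker] at hx
      have := congrArg (Units.val) hx
      simpa [hφ] using this
    have g : ∀ C : {C : Matrix (Fin n) (Fin n) F // C.det = 1},
        Matrix.nonsingInvUnit C.1 (by rw [C.2]; exact isUnit_one) ∈ MonoidHom.ker φ := by
      intro C
      rw [MonoidHom.mem_ker]
      apply Units.ext
      simpa [hφ, Matrix.nonsingInvUnit] using C.2
    exact Nat.card_congr
      ⟨fun x => ⟨_, f x⟩, fun C => ⟨_, g C⟩,
        fun x => Subtype.ext (Units.ext rfl), fun C => Subtype.ext rfl⟩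
  have hq := Subgroup.card_eq_card_quotient_mul_card_subgroup (MonoidHom.ker φ)
  rw [Nat.card_congr (QuotientGroup.quotientKerEquivOfSurjective φ hsurj).toEquiv,
    Nat.card_units, hker] at hq
  exact hq


private lemma card_matrix_rect {F : Type*} [Field F] [Fintype F] (a b : ℕ) :
    Nat.card (Matrix (Fin a) (Fin b) F) = Nat.card F ^ (a * b) := by
  show Nat.card (Fin a → Fin b → F) = _
  rw [Nat.card_fun, Nat.card_fun]
  simp [Nat.card_eq_fintype_card, ← pow_mul, mul_comm]

private lemma card_GLpred {F : Type*} [Field F] [Fintype F] {ℓ ℓ' : ℕ}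
    (hℓ : 1 ≤ ℓ) (hℓℓ' : ℓ ≤ ℓ') :
    Nat.card {B : GL (Fin ℓ') F //
        (((↑B : Matrix (Fin ℓ') (Fin ℓ') F).submatrix (Fin.castLE hℓℓ')
            (Fin.castLE hℓℓ')).det = 1
          ∧ ∀ (j₀ : Fin ℓ') (k0 : Fin ℓ), ℓ ≤ (j₀ : ℕ) →
              (↑B : Matrix (Fin ℓ') (Fin ℓ') F) j₀ (Fin.castLE hℓℓ' k0) = 0)}
      = Nat.card {C : Matrix (Fin ℓ) (Fin ℓ) F // C.det = 1}
        * Nat.card F ^ (ℓ * (ℓ' - ℓ)) * Nat.card (GL (Fin (ℓ' - ℓ)) F) := by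
  classical
  set m := ℓ' - ℓ with hmdef
  have hm : ℓ + m = ℓ' := by omega
  set eqv : Fin ℓ ⊕ Fin m ≃ Fin ℓ' := finSumFinEquiv.trans (finCongr hm) with heqv
  have fe1 : ∀ j : Fin ℓ, eqv (Sum.inl j) = Fin.castLE hℓℓ' j := by
    intro j
    apply Fin.ext
    simp [heqv]
  have fe2 : ∀ x : Fin m, ((eqv (Sum.inr x)) : ℕ) = ℓ + (x : ℕ) := by
    intro x
    simp [heqv]
  -- the predicate
  set P : Matrix (Fin ℓ') (Fin ℓ') F → Prop := fun M =>
    ((M.submatrix (Fin.castLE hℓℓ') (Fin.castLE hℓℓ')).det = 1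
      ∧ ∀ (j₀ : Fin ℓ') (k0 : Fin ℓ), ℓ ≤ (j₀ : ℕ) → M j₀ (Fin.castLE hℓℓ' k0) = 0) with hP
  have E1 : {B : GL (Fin ℓ') F // P ↑B} ≃ {M : Matrix (Fin ℓ') (Fin ℓ') F //
      IsUnit M.det ∧ P M} :=
    ⟨fun B => ⟨↑B.1, (Matrix.isUnit_iff_isUnit_det _).mp B.1.isUnit, B.2⟩,
     fun M => ⟨Matrix.nonsingInvUnit M.1 M.2.1, M.2.2⟩,
     fun B => Subtype.ext (Units.ext rfl), fun M => Subtype.ext rfl⟩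
  -- block translation
  have key1 : ∀ M : Matrix (Fin ℓ') (Fin ℓ') F, P M →
      M.submatrix eqv eqv = Matrix.fromBlocks
        (Matrix.of fun i j => M (eqv (Sum.inl i)) (eqv (Sum.inl j)))
        (Matrix.of fun i y => M (eqv (Sum.inl i)) (eqv (Sum.inr y)))
        0
        (Matrix.of fun x y => M (eqv (Sum.inr x)) (eqv (Sum.inr y))) := by
    intro M hPM
    ext i j
    cases i with
    | inl i =>
      cases j with
      | inl j => simp [Matrix.fromBlocks]
      | inr y => simp [Matrix.fromBlocks]
    | inr x =>
      cases j with
      | inl j =>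
        simp only [Matrix.submatrix_apply, Matrix.fromBlocks, Matrix.of_apply,
          Sum.elim_inr, Sum.elim_inl, Matrix.zero_apply]
        rw [fe1 j]
        exact hPM.2 _ j (by rw [fe2 x]; omega)
      | inr y => simp [Matrix.fromBlocks]
  have keyC : ∀ M : Matrix (Fin ℓ') (Fin ℓ') F,
      (Matrix.of fun i j => M (eqv (Sum.inl i)) (eqv (Sum.inl j)))
        = M.submatrix (Fin.castLE hℓℓ') (Fin.castLE hℓℓ') := by
    intro M
    ext i j
    simp [fe1]
  have E2 : {M : Matrix (Fin ℓ') (Fin ℓ') F // IsUnit M.det ∧ P M}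
      ≃ ({C : Matrix (Fin ℓ) (Fin ℓ) F // C.det = 1} × Matrix (Fin ℓ) (Fin m) F
          × {W : Matrix (Fin m) (Fin m) F // IsUnit W.det}) := by
    refine ⟨fun M => ⟨⟨Matrix.of fun i j => M.1 (eqv (Sum.inl i)) (eqv (Sum.inl j)), ?_⟩,
        Matrix.of fun i y => M.1 (eqv (Sum.inl i)) (eqv (Sum.inr y)),
        ⟨Matrix.of fun x y => M.1 (eqv (Sum.inr x)) (eqv (Sum.inr y)), ?_⟩⟩,
      fun T => ⟨(Matrix.fromBlocks T.1.1 T.2.1 0 T.2.2.1).submatrix eqv.symm eqv.symm,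
        ?_, ?_, ?_⟩, ?_, ?_⟩
    · rw [keyC]
      exact M.2.2.1
    · have hdet := M.2.1
      rw [← Matrix.det_submatrix_equiv_self eqv M.1, key1 M.1 M.2.2,
        Matrix.det_fromBlocks_zero₂₁, keyC, M.2.2.1, one_mul] at hdet
      exact hdet
    · rw [Matrix.det_submatrix_equiv_self eqv.symm, Matrix.det_fromBlocks_zero₂₁, T.1.2,
        one_mul]
      exact T.2.2.2
    · have : ((Matrix.fromBlocks T.1.1 T.2.1 0 T.2.2.1).submatrix eqv.symm
          eqv.symm).submatrix (Fin.castLE hℓℓ') (Fin.castLE hℓℓ') = T.1.1 := by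
        ext i j
        rw [Matrix.submatrix_apply, Matrix.submatrix_apply, ← fe1 i, ← fe1 j,
          Equiv.symm_apply_apply, Equiv.symm_apply_apply]
        simp [Matrix.fromBlocks]
      rw [this]
      exact T.1.2
    · intro j₀ k0 hj₀
      rw [Matrix.submatrix_apply, ← fe1 k0, Equiv.symm_apply_apply]
      rcases h : eqv.symm j₀ with i | x
      · exfalso
        have : j₀ = eqv (Sum.inl i) := by
          rw [← h, Equiv.apply_symm_apply]
        rw [fe1 i] at this
        have : (j₀ : ℕ) = (i : ℕ) := by rw [this]; rfl
        have := i.isLt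
        omega
      · simp [Matrix.fromBlocks]
    · intro M
      apply Subtype.ext
      show (Matrix.fromBlocks _ _ 0 _).submatrix eqv.symm eqv.symm = M.1
      rw [← key1 M.1 M.2.2, Matrix.submatrix_submatrix, Equiv.self_comp_symm,
        Matrix.submatrix_id_id]
    · intro T
      have hblocks : ∀ (p q : Fin ℓ ⊕ Fin m),
          ((Matrix.fromBlocks T.1.1 T.2.1 0 T.2.2.1).submatrix eqv.symm eqv.symm)
            (eqv p) (eqv q) = (Matrix.fromBlocks T.1.1 T.2.1 0 T.2.2.1) p q := by
        intro p q
        rw [Matrix.submatrix_apply, Equiv.symm_apply_apply, Equiv.symm_apply_apply]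
      refine Prod.ext (Subtype.ext ?_) (Prod.ext ?_ (Subtype.ext ?_))
      · ext i j
        exact (hblocks (Sum.inl i) (Sum.inl j)).trans (by simp [Matrix.fromBlocks])
      · ext i y
        exact (hblocks (Sum.inl i) (Sum.inr y)).trans (by simp [Matrix.fromBlocks])
      · ext x y
        exact (hblocks (Sum.inr x) (Sum.inr y)).trans (by simp [Matrix.fromBlocks])
  have E3 : {W : Matrix (Fin m) (Fin m) F // IsUnit W.det} ≃ GL (Fin m) F :=
    ⟨fun W => Matrix.nonsingInvUnit W.1 W.2, fun W => ⟨↑W, (Matrix.isUnit_iff_isUnit_det _).mp W.isUnit⟩,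
     fun W => Subtype.ext rfl, fun W => Units.ext rfl⟩
  rw [Nat.card_congr (E1.trans E2)]
  rw [Nat.card_prod, Nat.card_prod, Nat.card_congr E3, card_matrix_rect, mul_assoc]


private lemma card_u {F : Type*} [Field F] [Fintype F] {ℓ ℓ' : ℕ} (hℓℓ' : ℓ ≤ ℓ') :
    Nat.card {u : Matrix (Fin ℓ) (Fin ℓ') F // u.submatrix id (Fin.castLE hℓℓ') = 0}
      = Nat.card F ^ (ℓ * (ℓ' - ℓ)) := by
  classical
  have hm : ℓ + (ℓ' - ℓ) = ℓ' := by omega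
  set eqv : Fin ℓ ⊕ Fin (ℓ' - ℓ) ≃ Fin ℓ' := finSumFinEquiv.trans (finCongr hm) with heqv
  have fe1 : ∀ j : Fin ℓ, eqv (Sum.inl j) = Fin.castLE hℓℓ' j := by
    intro j
    apply Fin.ext
    simp [heqv]
  have E : {u : Matrix (Fin ℓ) (Fin ℓ') F // u.submatrix id (Fin.castLE hℓℓ') = 0}
      ≃ Matrix (Fin ℓ) (Fin (ℓ' - ℓ)) F := by
    refine ⟨fun u => Matrix.of fun i x => u.1 i (eqv (Sum.inr x)),
      fun E => ⟨Matrix.of fun i j => Sum.elim (fun _ => (0 : F)) (fun x => E i x) (eqv.symm j),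
        ?_⟩, ?_, ?_⟩
    · ext i k
      rw [Matrix.submatrix_apply, Matrix.of_apply, ← fe1 k, Equiv.symm_apply_apply]
      simp
    · intro u
      apply Subtype.ext
      ext i j
      show Sum.elim (fun _ => (0 : F)) (fun x => u.1 i (eqv (Sum.inr x))) (eqv.symm j)
        = u.1 i j
      rcases h : eqv.symm j with k | x
      · have hj : j = eqv (Sum.inl k) := by rw [← h, Equiv.apply_symm_apply]
        have h2 := congrFun (congrFun u.2 i) k
        rw [Matrix.submatrix_apply] at h2
        simp only [Sum.elim_inl]
        rw [hj, fe1 k]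
        simpa using h2.symm
      · have hj : j = eqv (Sum.inr x) := by rw [← h, Equiv.apply_symm_apply]
        simp only [Sum.elim_inr]
        rw [hj]
    · intro E
      ext i x
      show Sum.elim (fun _ => (0 : F)) (fun x' => E i x') (eqv.symm (eqv (Sum.inr x))) = E i x
      rw [Equiv.symm_apply_apply]
      rfl
  rw [Nat.card_congr E]
  show Nat.card (Fin ℓ → Fin (ℓ' - ℓ) → F) = _
  rw [Nat.card_fun, Nat.card_fun]
  simp [Nat.card_eq_fintype_card, ← pow_mul, mul_comm]

end countingx

/-- The stabilizer, in the group of affine substitutions `X ↦ XA⁻¹ + u`, of the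
leading maximal minor `L = det((X_{ij})_{1≤i,j≤ℓ})` has cardinality
`q^{ℓ(ℓ'-ℓ)}/(q-1) · ∏_{i=ℓ}^{ℓ'-1}(q^{ℓ'}-q^i) · ∏_{j=0}^{ℓ-1}(q^ℓ-q^j)`. -/
theorem card_stabilizer_leading_minor (F : Type*) [Field F] [Fintype F]
    (q ℓ ℓ' : ℕ) (hq : Fintype.card F = q) (hℓ : 1 ≤ ℓ) (hℓℓ' : ℓ ≤ ℓ') :
    (q - 1) * Nat.card {p : GL (Fin ℓ') F × Matrix (Fin ℓ) (Fin ℓ') F //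
        affSubst F ℓ ℓ' p.1 p.2
            (((genMatrixRect F ℓ ℓ').submatrix id (Fin.castLE hℓℓ')).det)
          = ((genMatrixRect F ℓ ℓ').submatrix id (Fin.castLE hℓℓ')).det}
      = q ^ (ℓ * (ℓ' - ℓ)) * (∏ i ∈ Finset.Ico ℓ ℓ', (q ^ ℓ' - q ^ i))
          * ∏ j ∈ Finset.range ℓ, (q ^ ℓ - q ^ j) := by
  classical
  have hqq : Nat.card F = q := by rw [Nat.card_eq_fintype_card, hq]
  have hiff : ∀ p : GL (Fin ℓ') F × Matrix (Fin ℓ) (Fin ℓ') F,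
      (affSubst F ℓ ℓ' p.1 p.2 (((genMatrixRect F ℓ ℓ').submatrix id (Fin.castLE hℓℓ')).det)
          = ((genMatrixRect F ℓ ℓ').submatrix id (Fin.castLE hℓℓ')).det)
        ↔ ((((↑((p.1)⁻¹) : Matrix (Fin ℓ') (Fin ℓ') F).submatrix (Fin.castLE hℓℓ')
              (Fin.castLE hℓℓ')).det = 1
            ∧ ∀ (j₀ : Fin ℓ') (k0 : Fin ℓ), ℓ ≤ (j₀ : ℕ) →
                (↑((p.1)⁻¹) : Matrix (Fin ℓ') (Fin ℓ') F) j₀ (Fin.castLE hℓℓ' k0) = 0)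
          ∧ p.2.submatrix id (Fin.castLE hℓℓ') = 0) := by
    intro p
    constructor
    · intro h
      obtain ⟨h1, h2, h3⟩ := char_backward hℓ hℓℓ' p.1 p.2 h
      exact ⟨⟨h1, h2⟩, h3⟩
    · rintro ⟨⟨h1, h2⟩, h3⟩
      exact char_forward hℓℓ' p.1 p.2 h1 h2 h3
  rw [Nat.card_congr ((Equiv.subtypeEquivRight hiff).trans
    (Equiv.subtypeProdEquivProd
      (p := fun A : GL (Fin ℓ') F =>
        (((↑(A⁻¹) : Matrix (Fin ℓ') (Fin ℓ') F).submatrix (Fin.castLE hℓℓ')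
            (Fin.castLE hℓℓ')).det = 1
          ∧ ∀ (j₀ : Fin ℓ') (k0 : Fin ℓ), ℓ ≤ (j₀ : ℕ) →
              (↑(A⁻¹) : Matrix (Fin ℓ') (Fin ℓ') F) j₀ (Fin.castLE hℓℓ' k0) = 0))
      (q := fun u : Matrix (Fin ℓ) (Fin ℓ') F =>
        u.submatrix id (Fin.castLE hℓℓ') = 0))),
    Nat.card_prod]
  have Einv : {A : GL (Fin ℓ') F //
        (((↑(A⁻¹) : Matrix (Fin ℓ') (Fin ℓ') F).submatrix (Fin.castLE hℓℓ')
            (Fin.castLE hℓℓ')).det = 1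
          ∧ ∀ (j₀ : Fin ℓ') (k0 : Fin ℓ), ℓ ≤ (j₀ : ℕ) →
              (↑(A⁻¹) : Matrix (Fin ℓ') (Fin ℓ') F) j₀ (Fin.castLE hℓℓ' k0) = 0)}
      ≃ {B : GL (Fin ℓ') F //
        (((↑B : Matrix (Fin ℓ') (Fin ℓ') F).submatrix (Fin.castLE hℓℓ')
            (Fin.castLE hℓℓ')).det = 1
          ∧ ∀ (j₀ : Fin ℓ') (k0 : Fin ℓ), ℓ ≤ (j₀ : ℕ) →
              (↑B : Matrix (Fin ℓ') (Fin ℓ') F) j₀ (Fin.castLE hℓℓ' k0) = 0)} :=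
    ⟨fun A => ⟨(A.1)⁻¹, A.2⟩, fun B => ⟨(B.1)⁻¹, by rw [inv_inv]; exact B.2⟩,
     fun A => Subtype.ext (inv_inv _), fun B => Subtype.ext (inv_inv _)⟩
  rw [Nat.card_congr Einv, card_GLpred hℓ hℓℓ', card_u hℓℓ', hqq]
  have hSL : (q - 1) * Nat.card {C : Matrix (Fin ℓ) (Fin ℓ) F // C.det = 1}
      = ∏ j ∈ Finset.range ℓ, (q ^ ℓ - q ^ j) := by
    have h1 := card_SL (F := F) hℓ
    rw [Matrix.card_GL_field, hqq, hq] at h1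
    rw [← h1]
    exact Fin.prod_univ_eq_prod_range (fun k => q ^ ℓ - q ^ k) ℓ
  have hGLm : Nat.card (GL (Fin (ℓ' - ℓ)) F)
      = ∏ i ∈ Finset.range (ℓ' - ℓ), (q ^ (ℓ' - ℓ) - q ^ i) := by
    rw [Matrix.card_GL_field, hq]
    exact Fin.prod_univ_eq_prod_range (fun k => q ^ (ℓ' - ℓ) - q ^ k) (ℓ' - ℓ)
  have hIco : ∏ i ∈ Finset.Ico ℓ ℓ', (q ^ ℓ' - q ^ i)
      = q ^ (ℓ * (ℓ' - ℓ)) * ∏ i ∈ Finset.range (ℓ' - ℓ), (q ^ (ℓ' - ℓ) - q ^ i) := by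
    rw [Finset.prod_Ico_eq_prod_range]
    have hterm : ∀ i, q ^ ℓ' - q ^ (ℓ + i) = q ^ ℓ * (q ^ (ℓ' - ℓ) - q ^ i) := by
      intro i
      rw [show q ^ ℓ' = q ^ ℓ * q ^ (ℓ' - ℓ) by rw [← pow_add]; congr 1; omega,
        pow_add, ← Nat.mul_sub]
    rw [Finset.prod_congr rfl (fun i _ => hterm i), Finset.prod_mul_distrib,
      Finset.prod_const, Finset.card_range, ← pow_mul]
  rw [hGLm, hIco, ← hSL]
  ring
end
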